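/- arXiv:math/0111101 — 3 statements merged into one kernel-verified Lean document; each statement's English description precedes it below -/
import Mathlib

section
/- Let R be a commutative ring, s a unit of R, and z = s - s⁻¹. Let a : ℕ → ℕ → R satisfy: for all i ≥ 1 and j ≥ 1, a i (j-1) - a (i-1) j = z * (a (i-1) 0) * (a 0 (j-1)). Define formal power series A(t) = 1 + z·∑_{m≥1} (a (m-1) 0)·t^m and Ā(t) = 1 - z·∑_{m≥1} (a 0 (m-1))·t^m in R[[t]]. Then A(t) · Ā(t) = 1; in particular A(t) is a unit of R[[t]] with inverse Ā(t). -/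
/-- Corollary 6 of the paper, abstracted: with the skein relation hypothesis on
`a`, the generating series `A(t) = 1 + z·∑_{m≥1} a (m-1) 0 · t^m` and
`Ā(t) = 1 - z·∑_{m≥1} a 0 (m-1) · t^m` satisfy `A(t)·Ā(t) = 1`; in particular
`A(t)` is a unit of `R⟦t⟧` (with inverse `Ā(t)`). -/
theorem power_sums_homfly_stmt1 {R : Type*} [CommRing R] (s : Rˣ) (z : R)
    (hz : z = (s : R) - ((s⁻¹ : Rˣ) : R))
    (a : ℕ → ℕ → R)
    (ha : ∀ i j : ℕ, 1 ≤ i → 1 ≤ j →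
      a i (j - 1) - a (i - 1) j = z * a (i - 1) 0 * a 0 (j - 1))
    (A Abar : PowerSeries R)
    (hA : A = PowerSeries.mk fun m => if m = 0 then 1 else z * a (m - 1) 0)
    (hAbar : Abar = PowerSeries.mk fun m => if m = 0 then 1 else -(z * a 0 (m - 1))) :
    A * Abar = 1 ∧ IsUnit A := by
  subst hA hAbar
  have hmul : (PowerSeries.mk fun m => if m = 0 then 1 else z * a (m - 1) 0) *
      (PowerSeries.mk fun m => if m = 0 then 1 else -(z * a 0 (m - 1))) = 1 := by
    ext n
    rw [PowerSeries.coeff_mul, Finset.Nat.sum_antidiagonal_eq_sum_range_succ_mk]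
    rcases n with _ | n
    · simp
    · simp only [PowerSeries.coeff_mk, PowerSeries.coeff_one, Nat.succ_ne_zero, if_false]
      rw [Finset.sum_range_succ, Finset.sum_range_succ']
      have tele : ∑ i ∈ Finset.range n, (z * a i 0 * a 0 (n - (i + 1)))
          = a n 0 - a 0 n := by
        have h0 := Finset.sum_range_sub (fun i => a i (n - i)) n
        simp only [Nat.sub_self, Nat.sub_zero] at h0
        rw [← h0]
        apply Finset.sum_congr rfl
        intro i hi
        simp only [Finset.mem_range] at hi
        have h := ha (i + 1) (n - i) (by omega) (by omega)
        simp only [Nat.add_sub_cancel] at h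
        have e1 : n - i - 1 = n - (i + 1) := by omega
        rw [e1] at h
        exact h.symm
      have hsum : ∑ i ∈ Finset.range n,
          ((if i + 1 = 0 then 1 else z * a (i + 1 - 1) 0) *
            (if n + 1 - (i + 1) = 0 then (1 : R) else -(z * a 0 (n + 1 - (i + 1) - 1))))
          = ∑ i ∈ Finset.range n, -(z * (z * a i 0 * a 0 (n - (i + 1)))) := by
        apply Finset.sum_congr rfl
        intro i hi
        simp only [Finset.mem_range] at hi
        have h1 : n + 1 - (i + 1) ≠ 0 := by omega
        have h2 : n + 1 - (i + 1) - 1 = n - (i + 1) := by omega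
        simp only [Nat.add_sub_cancel, Nat.succ_ne_zero, if_false, h1, h2]
        ring
      rw [hsum, Finset.sum_neg_distrib, ← Finset.mul_sum, tele]
      simp only [Nat.sub_self, Nat.add_sub_cancel, Nat.succ_ne_zero, if_false,
        Nat.sub_zero, if_true]
      ring_nf
  exact ⟨hmul, IsUnit.of_mul_eq_one _ hmul⟩
end

section
/- Let R be a commutative ring, s a unit of R, and z = s - s⁻¹. Let a : ℕ → ℕ → R satisfy: for all i ≥ 1 and j ≥ 1, a i (j-1) - a (i-1) j = z * (a (i-1) 0) * (a 0 (j-1)). For m ≥ 1 define Π_m = ∑_{i=0}^{m-1} a i (m-1-i). Then for every m ≥ 1, Π_m = m · (a (m-1) 0) - z · ∑_{i=1}^{m-1} i · (a (i-1) 0) · (a 0 (m-i-1)). -/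
/-- Intermediate identity in the proof of Theorem 7 of the paper, abstracted:
with the skein relation hypothesis on `a`, for `m ≥ 1` the braid sum
`Π_m = ∑_{i=0}^{m-1} a i (m-1-i)` satisfies
`Π_m = m · a (m-1) 0 - z · ∑_{i=1}^{m-1} i · a (i-1) 0 · a 0 (m-i-1)`. -/
theorem power_sums_homfly_stmt3 {R : Type*} [CommRing R] (s : Rˣ) (z : R)
    (hz : z = (s : R) - ((s⁻¹ : Rˣ) : R))
    (a : ℕ → ℕ → R)
    (ha : ∀ i j : ℕ, 1 ≤ i → 1 ≤ j →
      a i (j - 1) - a (i - 1) j = z * a (i - 1) 0 * a 0 (j - 1))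
    (m : ℕ) (hm : 1 ≤ m) :
    ∑ i ∈ Finset.range m, a i (m - 1 - i)
      = (m : R) * a (m - 1) 0
        - z * ∑ i ∈ Finset.Icc 1 (m - 1), (i : R) * a (i - 1) 0 * a 0 (m - i - 1) := by
  obtain ⟨n, rfl⟩ : ∃ n, m = n + 1 := ⟨m - 1, by omega⟩
  clear hm
  -- telescoping claim
  have key : ∀ j, j ≤ n → a (n - j) j
      = a n 0 - z * ∑ k ∈ Finset.range j, a (n - 1 - k) 0 * a 0 k := by
    intro j
    induction j with
    | zero => intro _; simp
    | succ j ih =>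
      intro hj
      have h1 := ha (n - j) (j + 1) (by omega) (by omega)
      rw [Nat.add_sub_cancel] at h1
      have hih := ih (by omega)
      have e1 : n - (j + 1) = n - j - 1 := by omega
      have e2 : n - j - 1 = n - 1 - j := by omega
      rw [Finset.sum_range_succ, e1]
      have h2 : a (n - j - 1) (j + 1)
          = a (n - j) j - z * a (n - j - 1) 0 * a 0 j := by
        linear_combination -h1
      rw [h2, hih, e2]
      ring
  -- reflect the LHS
  have hrefl : ∑ i ∈ Finset.range (n + 1), a i (n + 1 - 1 - i)
      = ∑ j ∈ Finset.range (n + 1), a (n - j) j := by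
    rw [← Finset.sum_range_reflect (fun j => a (n - j) j) (n + 1)]
    apply Finset.sum_congr rfl
    intro i hi
    rw [Finset.mem_range] at hi
    have e1 : n + 1 - 1 - i = n - i := by omega
    have e2 : n - (n + 1 - 1 - i) = i := by omega
    rw [e2, e1]
  -- triangle counting lemma
  have tri : ∀ (N : ℕ) (g : ℕ → R),
      ∑ j ∈ Finset.range (N + 1), ∑ k ∈ Finset.range j, g k
        = ∑ k ∈ Finset.range N, ((N - k : ℕ) : R) * g k := by
    intro N g
    induction N with
    | zero => simp
    | succ N ih =>
      rw [Finset.sum_range_succ, ih, Finset.sum_range_succ (fun j => ((N + 1 - j : ℕ) : R) * g j),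
        Finset.sum_range_succ g]
      have : ∑ k ∈ Finset.range N, ((N + 1 - k : ℕ) : R) * g k
          = ∑ k ∈ Finset.range N, (((N - k : ℕ) : R) * g k + g k) := by
        apply Finset.sum_congr rfl
        intro k hk
        rw [Finset.mem_range] at hk
        have : (N + 1 - k : ℕ) = (N - k) + 1 := by omega
        rw [this]
        push_cast
        ring
      rw [this, Finset.sum_add_distrib]
      simp
      ring
  rw [hrefl]
  have hsum : ∑ j ∈ Finset.range (n + 1), a (n - j) j
      = ∑ j ∈ Finset.range (n + 1),
          (a n 0 - z * ∑ k ∈ Finset.range j, a (n - 1 - k) 0 * a 0 k) := by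
    apply Finset.sum_congr rfl
    intro j hj
    rw [Finset.mem_range] at hj
    exact key j (by omega)
  rw [hsum, Finset.sum_sub_distrib, Finset.sum_const, ← Finset.mul_sum,
    tri n (fun k => a (n - 1 - k) 0 * a 0 k)]
  -- rewrite the Icc sum
  have hicc : ∑ i ∈ Finset.Icc 1 (n + 1 - 1), (i : R) * a (i - 1) 0 * a 0 (n + 1 - i - 1)
      = ∑ k ∈ Finset.range n, ((n - k : ℕ) : R) * (a (n - 1 - k) 0 * a 0 k) := by
    have e0 : n + 1 - 1 = n := by omega
    rw [e0, ← Finset.Ico_add_one_right_eq_Icc, Finset.sum_Ico_eq_sum_range]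
    simp only [Nat.add_sub_cancel]
    rw [← Finset.sum_range_reflect
      (fun i => ((1 + i : ℕ) : R) * a (1 + i - 1) 0 * a 0 (n + 1 - (1 + i) - 1)) n]
    apply Finset.sum_congr rfl
    intro k hk
    rw [Finset.mem_range] at hk
    have e2 : 1 + (n - 1 - k) = n - k := by omega
    have e3 : n - k - 1 = n - 1 - k := by omega
    have e4 : n + 1 - (n - k) - 1 = k := by omega
    rw [e2, e3, e4]
    ring
  rw [hicc, Finset.card_range]
  push_cast
  ring
end

section
/- Let R be a commutative ring, s a unit of R, and z = s - s⁻¹. Let a : ℕ → ℕ → R satisfy: for all i ≥ 1 and j ≥ 1, a i (j-1) - a (i-1) j = z * (a (i-1) 0) * (a 0 (j-1)). Define formal power series A(t) = 1 + z·∑_{m≥1} (a (m-1) 0)·t^m and Ā(t) = 1 - z·∑_{m≥1} (a 0 (m-1))·t^m in R[[t]], and for m ≥ 1 set Π_m = ∑_{i=0}^{m-1} a i (m-1-i). Then z · ∑_{m≥1} Π_m t^{m-1} = A'(t) · Ā(t), where A'(t) is the formal derivative of A(t). -/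
private lemma tele_aux {R : Type*} [CommRing R] (f : ℕ → R) (n : ℕ) :
    ∑ k ∈ Finset.range n, ((k : R) + 1) * (f (k + 1) - f k)
      = ((n : R) + 1) * f n - ∑ k ∈ Finset.range (n + 1), f k := by
  induction n with
  | zero => simp
  | succ n ih =>
    rw [Finset.sum_range_succ, ih, Finset.sum_range_succ (n := n + 1)]
    push_cast
    ring

/-- The generating-function identity (equation (1) in the proof of Theorem 7 of
the paper), abstracted: with the skein relation hypothesis on `a`, setting
`Π_m = ∑_{i=0}^{m-1} a i (m-1-i)`, the series `z·∑_{m≥1} Π_m t^{m-1}` equals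
`A'(t)·Ā(t)`, where `A(t) = 1 + z·∑_{m≥1} a (m-1) 0 · t^m`,
`Ā(t) = 1 - z·∑_{m≥1} a 0 (m-1) · t^m` and `A'` is the formal derivative. -/
theorem power_sums_homfly_stmt4 {R : Type*} [CommRing R] (s : Rˣ) (z : R)
    (hz : z = (s : R) - ((s⁻¹ : Rˣ) : R))
    (a : ℕ → ℕ → R)
    (ha : ∀ i j : ℕ, 1 ≤ i → 1 ≤ j →
      a i (j - 1) - a (i - 1) j = z * a (i - 1) 0 * a 0 (j - 1))
    (A Abar : PowerSeries R)
    (hA : A = PowerSeries.mk fun m => if m = 0 then 1 else z * a (m - 1) 0)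
    (hAbar : Abar = PowerSeries.mk fun m => if m = 0 then 1 else -(z * a 0 (m - 1))) :
    PowerSeries.mk (fun n => z * ∑ i ∈ Finset.range (n + 1), a i (n - i))
      = (PowerSeries.derivative R A) * Abar := by
  ext n
  rw [PowerSeries.coeff_mk, PowerSeries.coeff_mul,
    Finset.Nat.sum_antidiagonal_eq_sum_range_succ_mk]
  have hd : ∀ k : ℕ, (PowerSeries.coeff k) (PowerSeries.derivative R A)
      = z * a k 0 * ((k : R) + 1) := by
    intro k
    rw [hA, PowerSeries.coeff_derivative, PowerSeries.coeff_mk]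
    simp
  have hb : ∀ j : ℕ, (PowerSeries.coeff j) Abar
      = if j = 0 then 1 else -(z * a 0 (j - 1)) := by
    intro j; rw [hAbar, PowerSeries.coeff_mk]
  simp only [hd, hb]
  rw [Finset.sum_range_succ, Finset.sum_range_succ]
  have hlast : n - n = 0 := Nat.sub_self n
  rw [hlast, if_pos rfl]
  have hsum : ∑ k ∈ Finset.range n,
      (z * a k 0 * ((k : R) + 1)) * (if n - k = 0 then 1 else -(z * a 0 (n - k - 1)))
      = -z * ∑ k ∈ Finset.range n,
          ((k : R) + 1) * (a (k + 1) (n - (k + 1)) - a k (n - k)) := by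
    rw [Finset.mul_sum]
    apply Finset.sum_congr rfl
    intro k hk
    have hk' : k < n := Finset.mem_range.mp hk
    rw [if_neg (by omega)]
    have h := ha (k + 1) (n - k) (by omega) (by omega)
    simp only [Nat.add_sub_cancel] at h
    have e1 : n - (k + 1) = n - k - 1 := by omega
    rw [e1]
    linear_combination (z * ((k : R) + 1)) * h
  rw [hsum, tele_aux (fun i => a i (n - i)) n, Finset.sum_range_succ]
  simp only [hlast]
  ring
end
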